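/- arXiv:math/0301291 — 3 statements merged into one kernel-verified Lean document; each statement's English description precedes it below -/
import Mathlib

section
/- Let E be a countable set and let S ≤ T be closed subspaces of ℓ²(E). For every finite subset B ⊆ E, the determinant of the Gram-type matrix [⟨P_S(χ^e), χ^f⟩]_{e,f ∈ B} is at most the determinant of [⟨P_T(χ^e), χ^f⟩]_{e,f ∈ B}, where P_S, P_T denote orthogonal projections and χ^e is the indicator function of e. -/
open scoped InnerProductSpace

open Matrix

section Aux

variable {n : Type*} [Fintype n] [DecidableEq n]

open scoped MatrixOrder

omit [DecidableEq n] in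
/-- A Gram matrix of a family of vectors in a real inner product space is PSD. -/
lemma gram_posSemidef {H : Type*} [NormedAddCommGroup H] [InnerProductSpace ℝ H]
    (v : n → H) : (Matrix.of fun i j => ⟪v i, v j⟫_ℝ).PosSemidef := by
  apply Matrix.PosSemidef.of_dotProduct_mulVec_nonneg
  · ext i j
    simp [Matrix.conjTranspose_apply, real_inner_comm]
  · intro x
    have h : dotProduct (star x) ((Matrix.of fun i j => ⟪v i, v j⟫_ℝ) *ᵥ x)
        = ⟪∑ i, x i • v i, ∑ j, x j • v j⟫_ℝ := by
      simp only [dotProduct, mulVec, star_trivial, Matrix.of_apply, sum_inner, inner_sum,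
        real_inner_smul_left, real_inner_smul_right, Finset.mul_sum, dotProduct]
      exact Finset.sum_congr rfl fun i _ => Finset.sum_congr rfl fun j _ => by
        rw [real_inner_comm (v i) (v j)]; ring
    rw [h]
    exact real_inner_self_nonneg

lemma psd_det_nonneg {A : Matrix n n ℝ} (hA : A.PosSemidef) : 0 ≤ A.det := by
  rw [hA.1.det_eq_prod_eigenvalues]
  exact Finset.prod_nonneg fun i _ => by simpa using hA.eigenvalues_nonneg i

lemma posDef_of_posSemidef_det_ne_zero {A : Matrix n n ℝ} (hA : A.PosSemidef)
    (h : A.det ≠ 0) : A.PosDef := by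
  refine PosDef.of_dotProduct_mulVec_pos hA.1 fun x hx => ?_
  have hS : CFC.sqrt A * CFC.sqrt A = A := CFC.sqrt_mul_sqrt_self A (Matrix.nonneg_iff_posSemidef.mpr hA)
  have hSh : (CFC.sqrt A).IsHermitian := (Matrix.nonneg_iff_posSemidef.mp (CFC.sqrt_nonneg A)).isHermitian
  have hdet : (CFC.sqrt A).det ≠ 0 := by
    intro h0
    exact h (by rw [← hS, det_mul, h0, zero_mul])
  have hunit : IsUnit (CFC.sqrt A) := (Matrix.isUnit_iff_isUnit_det _).2 (isUnit_iff_ne_zero.2 hdet)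
  have hx' : (CFC.sqrt A) *ᵥ x ≠ 0 := by
    intro h0
    exact hx (Matrix.mulVec_injective_iff_isUnit.mpr hunit (by simp [h0]))
  have key : dotProduct (star x) (A *ᵥ x)
      = dotProduct (star ((CFC.sqrt A) *ᵥ x)) ((CFC.sqrt A) *ᵥ x) := by
    conv_lhs => rw [← hS]
    nth_rewrite 1 [← hSh.eq]
    rw [← mulVec_mulVec, dotProduct_mulVec, vecMul_conjTranspose, star_star]
  rw [key]
  exact dotProduct_star_self_pos_iff.mpr hx'

/-- Monotonicity of the determinant in the Loewner order on PSD real matrices. -/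
lemma det_le_det_psd {A C : Matrix n n ℝ} (hA : A.PosSemidef) (hCA : (C - A).PosSemidef) :
    A.det ≤ C.det := by
  have hC : C.PosSemidef := by simpa using hA.add hCA
  by_cases hAd : A.det = 0
  · rw [hAd]; exact psd_det_nonneg hC
  have hApd : A.PosDef := posDef_of_posSemidef_det_ne_zero hA hAd
  have hCpd : C.PosDef := by simpa using hApd.add_posSemidef hCA
  set S := CFC.sqrt C with hSdef
  have hSS : S * S = C := CFC.sqrt_mul_sqrt_self C (Matrix.nonneg_iff_posSemidef.mpr hC)
  have hSh : S.IsHermitian := (Matrix.nonneg_iff_posSemidef.mp (CFC.sqrt_nonneg C)).isHermitian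
  have hSdet : S.det ≠ 0 := by
    intro h0
    have : C.det = 0 := by rw [← hSS, det_mul, h0, zero_mul]
    exact hCpd.det_pos.ne' this
  have hSu : IsUnit S := (Matrix.isUnit_iff_isUnit_det _).2 (isUnit_iff_ne_zero.2 hSdet)
  haveI := hSu.invertible
  set M := S⁻¹ * A * S⁻¹ with hMdef
  have hSih : (S⁻¹).IsHermitian := hSh.inv
  have hMpsd : M.PosSemidef := by
    have := hA.mul_mul_conjTranspose_same S⁻¹
    rwa [hSih.eq] at this
  have h1M : (1 - M).PosSemidef := by
    have h := hCA.mul_mul_conjTranspose_same S⁻¹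
    have e : S⁻¹ * (C - A) * (S⁻¹)ᴴ = 1 - M := by
      rw [hSih.eq, Matrix.mul_sub, Matrix.sub_mul, hMdef]
      congr 1
      rw [← hSS]
      rw [← mul_assoc, inv_mul_of_invertible, one_mul, mul_inv_of_invertible]
    rwa [e] at h
  have hdetM : M.det ≤ 1 := by
    rw [hMpsd.1.det_eq_prod_eigenvalues]
    simp only [RCLike.ofReal_real_eq_id, id_eq]
    refine Finset.prod_le_one (fun i _ => hMpsd.eigenvalues_nonneg i) (fun i _ => ?_)
    have hv := hMpsd.1.eigenvalues_eq i
    set v : n → ℝ := ⇑(hMpsd.1.eigenvectorBasis i) with hvdef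
    have hnn := h1M.dotProduct_mulVec_nonneg v
    have hvv : dotProduct (star v) v = 1 := by
      have h1 : ⟪hMpsd.1.eigenvectorBasis i, hMpsd.1.eigenvectorBasis i⟫_ℝ = 1 := by
        have := hMpsd.1.eigenvectorBasis.orthonormal.1 i
        rw [real_inner_self_eq_norm_sq, this]; norm_num
      rw [EuclideanSpace.inner_eq_star_dotProduct, dotProduct_comm] at h1; exact h1
    rw [Matrix.sub_mulVec, one_mulVec, dotProduct_sub, hvv] at hnn
    have : hMpsd.1.eigenvalues i = dotProduct (star v) (M *ᵥ v) := by
      simpa using hv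
    rw [this]
    linarith
  have hAeq : A = S * M * S := by
    rw [hMdef, ← mul_assoc, ← mul_assoc, mul_inv_of_invertible, one_mul, mul_assoc,
      inv_mul_of_invertible, mul_one]
  have hdetC : C.det = S.det * S.det := by rw [← hSS, det_mul]
  calc A.det = C.det * M.det := by rw [hAeq, det_mul, det_mul, hdetC]; ring
    _ ≤ C.det * 1 := mul_le_mul_of_nonneg_left hdetM hCpd.det_pos.le
    _ = C.det := mul_one _

end Aux

/-- Monotonicity of determinantal cylinder probabilities: if `S ≤ T` are closed subspaces of
`ℓ²(E)`, then for every finite `B ⊆ E` the Gram determinant of the compression of the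
orthogonal projection onto `S` is at most that for `T`. -/
theorem det_gram_mono {E : Type*} [Countable E] [DecidableEq E]
    (S T : Submodule ℝ (lp (fun _ : E => ℝ) 2))
    [S.HasOrthogonalProjection] [T.HasOrthogonalProjection]
    (hST : S ≤ T) (B : Finset E) :
    (Matrix.of fun e f : B =>
        ⟪((S.orthogonalProjectionOnto (lp.single 2 (e : E) 1) : lp (fun _ : E => ℝ) 2)),
          lp.single 2 (f : E) 1⟫_ℝ).det ≤
    (Matrix.of fun e f : B =>
        ⟪((T.orthogonalProjectionOnto (lp.single 2 (e : E) 1) : lp (fun _ : E => ℝ) 2)),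
          lp.single 2 (f : E) 1⟫_ℝ).det := by
  classical
  set H := lp (fun _ : E => ℝ) 2 with hH
  let κ : E → H := fun e => lp.single 2 e 1
  let u : E → H := fun e => (S.orthogonalProjectionOnto (κ e) : H)
  let q : E → H := fun e => (T.orthogonalProjectionOnto (κ e) : H)
  have humem : ∀ e, u e ∈ T := fun e => hST (SetLike.coe_mem _)
  have hu : ∀ e f, ⟪u e, κ f⟫_ℝ = ⟪u e, u f⟫_ℝ := by
    intro e f
    have h := Submodule.inner_orthogonalProjectionOnto_eq_of_mem_left (K := S)
      (S.orthogonalProjectionOnto (κ e)) (κ f)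
    rw [Submodule.coe_inner] at h
    exact h.symm
  have hq : ∀ e f, ⟪q e, κ f⟫_ℝ = ⟪q e, q f⟫_ℝ := by
    intro e f
    have h := Submodule.inner_orthogonalProjectionOnto_eq_of_mem_left (K := T)
      (T.orthogonalProjectionOnto (κ e)) (κ f)
    rw [Submodule.coe_inner] at h
    exact h.symm
  have hqu : ∀ e f, ⟪q e, u f⟫_ℝ = ⟪u e, κ f⟫_ℝ := by
    intro e f
    have h1 := Submodule.inner_orthogonalProjectionOnto_eq_of_mem_right (K := T)
      (⟨u f, humem f⟩ : T) (κ e)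
    rw [Submodule.coe_inner] at h1
    -- h1 : ⟪q e, u f⟫ = ⟪κ e, u f⟫
    have h2 : ⟪u e, κ f⟫_ℝ = ⟪κ e, u f⟫_ℝ := Submodule.inner_starProjection_left_eq_right S (κ e) (κ f)
    -- h2 : ⟪u e, κ f⟫ = ⟪κ e, u f⟫
    rw [h1, ← h2]
  have huq : ∀ e f, ⟪u e, q f⟫_ℝ = ⟪u e, κ f⟫_ℝ := by
    intro e f
    have h := Submodule.inner_orthogonalProjectionOnto_eq_of_mem_left (K := T)
      (⟨u e, humem e⟩ : T) (κ f)
    rw [Submodule.coe_inner] at h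
    exact h
  have hw : ∀ e f, ⟪q e - u e, q f - u f⟫_ℝ = ⟪q e, κ f⟫_ℝ - ⟪u e, κ f⟫_ℝ := by
    intro e f
    rw [inner_sub_left, inner_sub_right, inner_sub_right, ← hq e f, hqu e f, huq e f, ← hu e f]
    ring
  have hA : (Matrix.of fun e f : B => ⟪u e, κ f⟫_ℝ).PosSemidef := by
    have : (Matrix.of fun e f : B => ⟪u e, κ f⟫_ℝ)
        = Matrix.of fun e f : B => ⟪u (e : E), u (f : E)⟫_ℝ := by
      ext e f
      exact hu e f
    rw [this]
    exact gram_posSemidef fun e : B => u (e : E)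
  have hCA : ((Matrix.of fun e f : B => ⟪q e, κ f⟫_ℝ)
      - (Matrix.of fun e f : B => ⟪u e, κ f⟫_ℝ)).PosSemidef := by
    have : ((Matrix.of fun e f : B => ⟪q e, κ f⟫_ℝ)
        - (Matrix.of fun e f : B => ⟪u e, κ f⟫_ℝ))
        = Matrix.of fun e f : B => ⟪q (e : E) - u (e : E), q (f : E) - u (f : E)⟫_ℝ := by
      ext e f
      simp only [Matrix.sub_apply, Matrix.of_apply]
      exact (hw e f).symm
    rw [this]
    exact gram_posSemidef fun e : B => q (e : E) - u (e : E)
  exact det_le_det_psd hA hCA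
end

section
/- Let Γ be a connected locally finite graph. A function θ ∈ ℓ²_-(Γ) is orthogonal to the closed span ◇ of all cycles if and only if θ is a gradient: there exists a function F on the vertices with θ(e) = F(head(e)) − F(tail(e)) for every directed edge e. -/
open scoped InnerProductSpace

variable {V : Type*}

/-- The unit flow `χ^d = 1_d - 1_{ď}` along a dart `d`, as an element of `ℓ²` of the darts. -/
noncomputable def chi (Γ : SimpleGraph V) (d : Γ.Dart) : lp (fun _ : Γ.Dart => ℝ) 2 :=
  letI := Classical.decEq Γ.Dart
  lp.single 2 d 1 - lp.single 2 d.symm 1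

/-- The set of cycles: sums `Σ_{i=1}^k χ^{e_i}` over closed sequences of concatenating darts. -/
def cycleSet (Γ : SimpleGraph V) : Set (lp (fun _ : Γ.Dart => ℝ) 2) :=
  {c | ∃ (k : ℕ) (_ : 0 < k) (e : Fin k → Γ.Dart),
    (∀ i : Fin k, (e i).snd = (e (⟨(i + 1) % k, Nat.mod_lt _ ‹0 < k›⟩ : Fin k)).fst) ∧
    c = ∑ i : Fin k, chi Γ (e i)}

lemma inner_chi_left (Γ : SimpleGraph V) (d : Γ.Dart) (θ : lp (fun _ : Γ.Dart => ℝ) 2) :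
    ⟪chi Γ d, θ⟫_ℝ = θ d - θ d.symm := by
  letI := Classical.decEq Γ.Dart
  rw [chi, inner_sub_left, lp.inner_single_left, lp.inner_single_left]
  simp [real_inner_comm]

/-- Sum of `θ` along the darts of a walk. -/
noncomputable def wsum {Γ : SimpleGraph V} (θ : lp (fun _ : Γ.Dart => ℝ) 2) {u v : V}
    (p : Γ.Walk u v) : ℝ :=
  (p.darts.map (fun d => θ d)).sum

lemma wsum_append {Γ : SimpleGraph V} (θ : lp (fun _ : Γ.Dart => ℝ) 2) {u v w : V}
    (p : Γ.Walk u v) (q : Γ.Walk v w) : wsum θ (p.append q) = wsum θ p + wsum θ q := by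
  simp [wsum]

lemma wsum_reverse {Γ : SimpleGraph V} (θ : lp (fun _ : Γ.Dart => ℝ) 2)
    (hθ : ∀ d : Γ.Dart, θ d.symm = -θ d) {u v : V} (p : Γ.Walk u v) :
    wsum θ p.reverse = -wsum θ p := by
  rw [wsum, SimpleGraph.Walk.darts_reverse, List.map_reverse, List.sum_reverse, List.map_map]
  have : (fun d : Γ.Dart => θ d) ∘ SimpleGraph.Dart.symm = fun d => -θ d := by
    funext d; exact hθ d
  rw [this]
  rw [wsum]
  induction p.darts with
  | nil => simp
  | cons a l ih => simp [ih]; ring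

lemma wsum_eq_grad {Γ : SimpleGraph V} (θ : lp (fun _ : Γ.Dart => ℝ) 2) {F : V → ℝ}
    (hF : ∀ d : Γ.Dart, θ d = F d.snd - F d.fst) {u v : V} (p : Γ.Walk u v) :
    wsum θ p = F v - F u := by
  induction p with
  | nil => simp [wsum]
  | cons h q ih => simp [wsum] at ih ⊢; rw [hF, ih]; ring

/-- For a connected locally finite graph, an antisymmetric `ℓ²` function `θ` is orthogonal to
the closed span of the cycles iff it is the gradient of some vertex function `F`. -/
theorem orthogonal_cycles_iff_gradient (Γ : SimpleGraph V) (hconn : Γ.Connected)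
    (hlf : ∀ v : V, (Γ.neighborSet v).Finite) [Countable V]
    (θ : lp (fun _ : Γ.Dart => ℝ) 2) (hθ : ∀ d : Γ.Dart, θ d.symm = -θ d) :
    θ ∈ ((Submodule.span ℝ (cycleSet Γ)).topologicalClosure)ᗮ ↔
      ∃ F : V → ℝ, ∀ d : Γ.Dart, θ d = F d.snd - F d.fst := by
  -- First: θ is in the orthogonal complement iff it is orthogonal to every cycle.
  have key : θ ∈ ((Submodule.span ℝ (cycleSet Γ)).topologicalClosure)ᗮ ↔
      ∀ c ∈ cycleSet Γ, ⟪c, θ⟫_ℝ = 0 := by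
    constructor
    · intro h c hc
      exact (Submodule.mem_orthogonal _ θ).1 h c
        (Submodule.le_topologicalClosure _ (Submodule.subset_span hc))
    · intro h u hu
      have hspan : Submodule.span ℝ (cycleSet Γ) ≤ (ℝ ∙ θ)ᗮ := by
        rw [Submodule.span_le]
        intro c hc
        exact Submodule.mem_orthogonal_singleton_iff_inner_left.2 (h c hc)
      have hcl : (Submodule.span ℝ (cycleSet Γ)).topologicalClosure ≤ (ℝ ∙ θ)ᗮ :=
        Submodule.topologicalClosure_minimal _ hspan (Submodule.isClosed_orthogonal _)
      exact Submodule.mem_orthogonal_singleton_iff_inner_left.1 (hcl hu)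
  rw [key]
  -- Inner product of a cycle with θ is twice the sum of θ along the darts.
  have inner_cycle : ∀ (k : ℕ) (e : Fin k → Γ.Dart),
      ⟪∑ i : Fin k, chi Γ (e i), θ⟫_ℝ = 2 * ∑ i : Fin k, θ (e i) := by
    intro k e
    rw [sum_inner, Finset.mul_sum]
    refine Finset.sum_congr rfl fun i _ => ?_
    rw [inner_chi_left, hθ]
    ring
  constructor
  · -- orthogonal → gradient
    intro h
    -- the sum of θ along any closed walk is zero
    have hcyc : ∀ (v : V) (p : Γ.Walk v v), wsum θ p = 0 := by
      intro v p
      rcases Nat.eq_zero_or_pos p.length with h0 | hk0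
      · have hnil : p.darts = [] :=
          List.eq_nil_of_length_eq_zero (by rw [p.length_darts, h0])
        simp [wsum, hnil]
      · set k := p.darts.length with hkdef
        have hk : 0 < k := by rw [hkdef, p.length_darts]; exact hk0
        have hne : p.darts ≠ [] := List.length_pos_iff.mp hk
        set e : Fin k → Γ.Dart := fun i => p.darts.get i with he
        have hcond : ∀ i : Fin k,
            (e i).snd = (e (⟨(i + 1) % k, Nat.mod_lt _ hk⟩ : Fin k)).fst := by
          intro i
          rcases Nat.lt_or_ge ((i : ℕ) + 1) k with hlt | hge
          · have hidx : (⟨((i : ℕ) + 1) % k, Nat.mod_lt _ hk⟩ : Fin k) =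
                ⟨(i : ℕ) + 1, hlt⟩ := by
              ext; simp [Nat.mod_eq_of_lt hlt]
            rw [hidx]
            exact List.isChain_iff_getElem.1 p.isChain_dartAdj_darts i (by omega)
          · have hi : (i : ℕ) + 1 = k := by have := i.isLt; omega
            have hmod : ((i : ℕ) + 1) % k = 0 := by rw [hi, Nat.mod_self]
            have h1 : e i = p.darts.getLast hne := by
              rw [he]
              simp only [List.getLast_eq_getElem, List.get_eq_getElem]
              congr 1
              omega
            have h2 : e ⟨((i : ℕ) + 1) % k, Nat.mod_lt _ hk⟩ = p.darts.head hne := by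
              rw [he]
              simp only [List.get_eq_getElem, List.head_eq_getElem_zero hne, hmod]
            rw [h1, h2, p.getLast_darts_eq_lastDart hne, p.head_darts_eq_firstDart hne]
            simp
        have hmem : (∑ i : Fin k, chi Γ (e i)) ∈ cycleSet Γ :=
          ⟨k, hk, e, hcond, rfl⟩
        have hz := h _ hmem
        rw [inner_cycle] at hz
        have hsum : ∑ i : Fin k, θ (e i) = 0 := by linarith
        have hws : wsum θ p = ∑ i : Fin k, θ (e i) := by
          rw [wsum, ← List.sum_ofFn]
          congr 1
          have : (fun i : Fin k => θ (e i)) = (fun d => θ d) ∘ p.darts.get := rfl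
          rw [this, ← List.map_ofFn, List.ofFn_get]
        rw [hws, hsum]
    -- path independence
    have hindep : ∀ (u w : V) (p q : Γ.Walk u w), wsum θ p = wsum θ q := by
      intro u w p q
      have := hcyc u (p.append q.reverse)
      rw [wsum_append, wsum_reverse θ hθ] at this
      linarith
    obtain ⟨v₀⟩ := hconn.nonempty
    refine ⟨fun v => wsum θ ((hconn.preconnected v₀ v).some), fun d => ?_⟩
    dsimp only
    have hd : (⟨(d.fst, d.snd), d.adj⟩ : Γ.Dart) = d := rfl
    have hcat : wsum θ (((hconn.preconnected v₀ d.fst).some).concat d.adj)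
        = wsum θ ((hconn.preconnected v₀ d.fst).some) + θ d := by
      rw [wsum, SimpleGraph.Walk.darts_concat, List.concat_eq_append]
      simp [wsum, hd]
    rw [hindep _ _ ((hconn.preconnected v₀ d.snd).some)
      (((hconn.preconnected v₀ d.fst).some).concat d.adj), hcat]
    ring
  · -- gradient → orthogonal
    rintro ⟨F, hF⟩ c ⟨k, hk, e, hcond, rfl⟩
    rw [inner_cycle]
    have : ∑ i : Fin k, θ (e i) = 0 := by
      have hFsum : ∀ i : Fin k, θ (e i) =
          F (e ⟨((i : ℕ) + 1) % k, Nat.mod_lt _ hk⟩).fst - F (e i).fst := by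
        intro i
        rw [hF, hcond i]
      rw [Finset.sum_congr rfl fun i _ => hFsum i, Finset.sum_sub_distrib]
      have hbij : Function.Bijective
          (fun i : Fin k => (⟨((i : ℕ) + 1) % k, Nat.mod_lt _ hk⟩ : Fin k)) := by
        rw [Finite.injective_iff_bijective.symm]
        intro i j hij
        have hij' : ((i : ℕ) + 1) % k = ((j : ℕ) + 1) % k := by
          simpa using congrArg Fin.val hij
        have hi := i.isLt
        have hj := j.isLt
        have hmi : ((i : ℕ) + 1) % k = if (i : ℕ) + 1 = k then 0 else (i : ℕ) + 1 := by
          split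
          · next h => rw [h, Nat.mod_self]
          · next h => exact Nat.mod_eq_of_lt (by omega)
        have hmj : ((j : ℕ) + 1) % k = if (j : ℕ) + 1 = k then 0 else (j : ℕ) + 1 := by
          split
          · next h => rw [h, Nat.mod_self]
          · next h => exact Nat.mod_eq_of_lt (by omega)
        rw [hmi, hmj] at hij'
        ext
        split at hij' <;> split at hij' <;> omega
      have := Function.Bijective.sum_comp hbij (fun j : Fin k => F (e j).fst)
      simp only [this]
      ring
    rw [this]
    ring
end

section
/- Let Γ be a connected locally finite countable graph. Then the wired uniform spanning forest measure WSF = P^★ and the free uniform spanning forest measure FSF = P^{◇^⊥} coincide if and only if ∇HD = 0, i.e. ℓ²_-(Γ) = ★ ⊕ ◇. -/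
open MeasureTheory
open scoped InnerProductSpace

variable {V : Type*}

/-- The star of a vertex `v`: the sum of `χ^d` over darts `d` with initial vertex `v`. -/
noncomputable def graphStar (Γ : SimpleGraph V) (v : V) : lp (fun _ : Γ.Dart => ℝ) 2 :=
  ∑ᶠ d ∈ {d : Γ.Dart | d.fst = v}, chi Γ d

/-- The space `ℓ²₋(Γ)` of antisymmetric square-summable functions on darts, realized as the
orthogonal complement of the span of the symmetrized indicators `1_d + 1_{ď}`. -/
noncomputable def l2minus (Γ : SimpleGraph V) : Submodule ℝ (lp (fun _ : Γ.Dart => ℝ) 2) :=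
  letI := Classical.decEq Γ.Dart
  (Submodule.span ℝ (Set.range fun d : Γ.Dart =>
    lp.single 2 d (1 : ℝ) + lp.single 2 d.symm 1))ᗮ

/-- The orthogonal projection onto a closed submodule, as a continuous endomorphism. -/
noncomputable def projCLM {H : Type*} [NormedAddCommGroup H] [InnerProductSpace ℝ H]
    [CompleteSpace H] (K : Submodule ℝ H) (hK : IsClosed (K : Set H)) : H →L[ℝ] H :=
  haveI : CompleteSpace K := hK.completeSpace_coe
  K.subtypeL.comp K.orthogonalProjectionOnto

lemma isClosed_inf {H : Type*} [NormedAddCommGroup H] [InnerProductSpace ℝ H]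
    {A B : Submodule ℝ H} (hA : IsClosed (A : Set H)) (hB : IsClosed (B : Set H)) :
    IsClosed ((A ⊓ B : Submodule ℝ H) : Set H) := by
  rw [Submodule.coe_inf]; exact hA.inter hB

section basic
variable (Γ : SimpleGraph V)

open scoped Classical in
lemma chi_apply (d e : Γ.Dart) :
    chi Γ d e = (if e = d then (1:ℝ) else 0) - (if e = d.symm then 1 else 0) := by
  letI := Classical.decEq Γ.Dart
  have h1 : ∀ (i j : Γ.Dart), (lp.single (E := fun _ : Γ.Dart => ℝ) 2 i (1:ℝ)) j
      = if j = i then 1 else 0 := by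
    intro i j
    by_cases h : j = i
    · subst h; simp [lp.single_apply_self]
    · simp [lp.single_apply_ne _ _ _ h, h]
  simp only [chi, lp.coeFn_sub, Pi.sub_apply, h1]
  split_ifs <;> rfl

lemma inner_chi_right (f : lp (fun _ : Γ.Dart => ℝ) 2) (d : Γ.Dart) :
    ⟪f, chi Γ d⟫_ℝ = f d - f d.symm := by
  letI := Classical.decEq Γ.Dart
  simp [chi, inner_sub_right, lp.inner_single_right]

open scoped Classical in
lemma inner_chi_chi (d e : Γ.Dart) :
    ⟪chi Γ d, chi Γ e⟫_ℝ = (if e = d then (2:ℝ) else 0) - (if e = d.symm then 2 else 0) := by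
  have he : e.symm.symm = e := SimpleGraph.Dart.symm_symm e
  rw [inner_chi_right, chi_apply, chi_apply]
  have h1 : (e.symm = d) ↔ (e = d.symm) := by
    constructor <;> intro h
    · rw [← h, SimpleGraph.Dart.symm_symm]
    · rw [h, SimpleGraph.Dart.symm_symm]
  have h2 : (e.symm = d.symm) ↔ (e = d) := by
    constructor <;> intro h
    · have := congrArg SimpleGraph.Dart.symm h
      simpa [SimpleGraph.Dart.symm_symm] using this
    · rw [h]
  simp only [h1, h2]
  split_ifs with p q q <;> ring_nf <;> simp_all <;> ring
end basic


section l2m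
variable (Γ : SimpleGraph V)

lemma mem_l2minus_iff (f : lp (fun _ : Γ.Dart => ℝ) 2) :
    f ∈ l2minus Γ ↔ ∀ d : Γ.Dart, f d.symm = - f d := by
  letI := Classical.decEq Γ.Dart
  have key : ∀ d : Γ.Dart,
      ⟪lp.single (E := fun _ : Γ.Dart => ℝ) 2 d (1:ℝ) + lp.single 2 d.symm 1, f⟫_ℝ
        = f d + f d.symm := by
    intro d
    simp [inner_add_left, lp.inner_single_left]
  constructor
  · intro h d
    have := h _ (Submodule.subset_span (Set.mem_range_self d))
    rw [key] at this
    linarith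
  · intro h
    intro u hu
    induction hu using Submodule.span_induction with
    | mem x hx =>
      obtain ⟨d, rfl⟩ := hx
      rw [key]
      rw [h d]; ring
    | zero => simp
    | add x y _ _ hx hy => rw [inner_add_left, hx, hy]; simp
    | smul c x _ hx => rw [inner_smul_left, hx]; simp

lemma chi_mem_l2minus (d : Γ.Dart) : chi Γ d ∈ l2minus Γ := by
  rw [mem_l2minus_iff]
  intro e
  classical
  rw [chi_apply, chi_apply]
  have h1 : (e.symm = d) ↔ (e = d.symm) := by
    constructor <;> intro h
    · rw [← h, SimpleGraph.Dart.symm_symm]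
    · rw [h, SimpleGraph.Dart.symm_symm]
  have h2 : (e.symm = d.symm) ↔ (e = d) := by
    constructor <;> intro h
    · have := congrArg SimpleGraph.Dart.symm h
      simpa [SimpleGraph.Dart.symm_symm] using this
    · rw [h]
  simp only [h1, h2]
  split_ifs <;> ring

lemma l2minus_isClosed : IsClosed ((l2minus Γ) : Set (lp (fun _ : Γ.Dart => ℝ) 2)) :=
  Submodule.isClosed_orthogonal _

end l2m


section star
variable (Γ : SimpleGraph V)

lemma symm_fst (d : Γ.Dart) : d.symm.fst = d.snd := rfl
lemma symm_snd (d : Γ.Dart) : d.symm.snd = d.fst := rfl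

lemma starSet_finite (hlf : ∀ v : V, (Γ.neighborSet v).Finite) (v : V) :
    {d : Γ.Dart | d.fst = v}.Finite := by
  apply Set.Finite.of_finite_image (f := fun d => d.snd)
  · apply (hlf v).subset
    rintro x ⟨d, hd, rfl⟩
    have := d.adj
    rw [hd] at this
    exact this
  · rintro d₁ h₁ d₂ h₂ h
    simp only [Set.mem_setOf_eq] at h₁ h₂
    refine SimpleGraph.Dart.ext _ _ (Prod.ext ?_ ?_)
    · exact h₁.trans h₂.symm
    · exact h

lemma graphStar_eq_sum (hlf : ∀ v : V, (Γ.neighborSet v).Finite) (v : V) :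
    graphStar Γ v = ∑ d ∈ (starSet_finite Γ hlf v).toFinset, chi Γ d :=
  finsum_mem_eq_finite_toFinset_sum _ _

lemma graphStar_mem_l2minus (hlf : ∀ v : V, (Γ.neighborSet v).Finite) (v : V) :
    graphStar Γ v ∈ l2minus Γ := by
  rw [graphStar_eq_sum Γ hlf v]
  exact Submodule.sum_mem _ fun d _ => chi_mem_l2minus Γ d

lemma cycle_mem_l2minus {c} (hc : c ∈ cycleSet Γ) : c ∈ l2minus Γ := by
  obtain ⟨k, hk, e, -, rfl⟩ := hc
  exact Submodule.sum_mem _ fun i _ => chi_mem_l2minus Γ (e i)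

open scoped Classical in
lemma inner_graphStar_chi (hlf : ∀ v : V, (Γ.neighborSet v).Finite) (v : V) (e : Γ.Dart) :
    ⟪graphStar Γ v, chi Γ e⟫_ℝ
      = (if e.fst = v then (2:ℝ) else 0) - (if e.snd = v then 2 else 0) := by
  rw [graphStar_eq_sum Γ hlf v, sum_inner]
  have h : ∀ d ∈ (starSet_finite Γ hlf v).toFinset,
      ⟪chi Γ d, chi Γ e⟫_ℝ = (if e = d then (2:ℝ) else 0) - (if e = d.symm then 2 else 0) :=
    fun d _ => inner_chi_chi Γ d e
  rw [Finset.sum_congr rfl h, Finset.sum_sub_distrib]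
  have h2 : ∀ d : Γ.Dart, (if e = d.symm then (2:ℝ) else 0) = if e.symm = d then 2 else 0 := by
    intro d
    have : (e = d.symm) ↔ (e.symm = d) := by
      constructor <;> intro h
      · rw [h, SimpleGraph.Dart.symm_symm]
      · rw [← h, SimpleGraph.Dart.symm_symm]
    simp only [this]
  simp only [h2, Finset.sum_ite_eq, Set.Finite.mem_toFinset, Set.mem_setOf_eq, symm_fst]

lemma inner_graphStar_cycle (hlf : ∀ v : V, (Γ.neighborSet v).Finite) (v : V)
    {c} (hc : c ∈ cycleSet Γ) : ⟪graphStar Γ v, c⟫_ℝ = 0 := by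
  classical
  obtain ⟨k, hk, e, hcyc, rfl⟩ := hc
  rw [inner_sum]
  have h : ∀ i : Fin k, ⟪graphStar Γ v, chi Γ (e i)⟫_ℝ
      = (if (e i).fst = v then (2:ℝ) else 0) - (if (e i).snd = v then 2 else 0) :=
    fun i => inner_graphStar_chi Γ hlf v (e i)
  rw [Finset.sum_congr rfl (fun i _ => h i), Finset.sum_sub_distrib, sub_eq_zero]
  haveI : NeZero k := ⟨hk.ne'⟩
  have hshift : ∀ i : Fin k, (⟨(↑i + 1) % k, Nat.mod_lt _ hk⟩ : Fin k) = i + 1 := by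
    intro i
    ext
    show ((i:ℕ) + 1) % k = ((i + 1 : Fin k) : ℕ)
    rw [Fin.val_add, Fin.val_one' k]
    conv_rhs => rw [Nat.add_mod, Nat.mod_mod_of_dvd _ dvd_rfl]
    rw [Nat.add_mod]
  calc ∑ i : Fin k, (if (e i).fst = v then (2:ℝ) else 0)
      = ∑ i : Fin k, (if (e (i + 1)).fst = v then (2:ℝ) else 0) :=
        (Fintype.sum_equiv (Equiv.addRight (1 : Fin k)) _ _ (fun i => rfl)).symm
    _ = ∑ i : Fin k, (if (e i).snd = v then (2:ℝ) else 0) := by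
        refine Finset.sum_congr rfl fun i _ => ?_
        rw [hcyc i, hshift i]

end star


section hilbert
variable {H : Type*} [NormedAddCommGroup H] [InnerProductSpace ℝ H] [CompleteSpace H]

lemma projCLM_congr {K L : Submodule ℝ H} (h : K = L) (hK : IsClosed (K : Set H))
    (hL : IsClosed (L : Set H)) : projCLM K hK = projCLM L hL := by subst h; rfl

lemma projCLM_mem (K : Submodule ℝ H) (hK : IsClosed (K : Set H)) (x : H) :
    projCLM K hK x ∈ K := by
  haveI : CompleteSpace K := hK.completeSpace_coe
  exact (K.orthogonalProjectionOnto x).2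

lemma sub_projCLM_mem_orthogonal (K : Submodule ℝ H) (hK : IsClosed (K : Set H)) (x : H) :
    x - projCLM K hK x ∈ Kᗮ := by
  haveI : CompleteSpace K := hK.completeSpace_coe
  exact K.sub_starProjection_mem_orthogonal x

lemma projCLM_eq_of {K : Submodule ℝ H} (hK : IsClosed (K : Set H)) {x u : H}
    (hu : u ∈ K) (h : x - u ∈ Kᗮ) : projCLM K hK x = u := by
  haveI : CompleteSpace K := hK.completeSpace_coe
  exact Submodule.eq_starProjection_of_mem_orthogonal hu h

lemma projCLM_eq_self {K : Submodule ℝ H} (hK : IsClosed (K : Set H)) {x : H}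
    (hx : x ∈ K) : projCLM K hK x = x :=
  projCLM_eq_of hK hx (by simp)

lemma orthogonal_topClosure (K : Submodule ℝ H) : (K.topologicalClosure)ᗮ = Kᗮ := by
  rw [← Submodule.orthogonal_orthogonal_eq_closure]
  exact le_antisymm (Submodule.orthogonal_le (Submodule.le_orthogonal_orthogonal K))
    (Submodule.le_orthogonal_orthogonal Kᗮ)

end hilbert


section subspaces
variable (Γ : SimpleGraph V) (hlf : ∀ v : V, (Γ.neighborSet v).Finite)
include hlf

lemma spanStar_le_l2minus :
    Submodule.span ℝ (Set.range (graphStar Γ)) ≤ l2minus Γ := by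
  rw [Submodule.span_le]
  rintro _ ⟨v, rfl⟩
  exact graphStar_mem_l2minus Γ hlf v

lemma spanCycle_le_l2minus : Submodule.span ℝ (cycleSet Γ) ≤ l2minus Γ := by
  rw [Submodule.span_le]
  intro c hc
  exact cycle_mem_l2minus Γ hc

lemma S_le_l2minus :
    (Submodule.span ℝ (Set.range (graphStar Γ))).topologicalClosure ≤ l2minus Γ :=
  Submodule.topologicalClosure_minimal _ (spanStar_le_l2minus Γ hlf) (l2minus_isClosed Γ)

lemma C_le_l2minus :
    (Submodule.span ℝ (cycleSet Γ)).topologicalClosure ≤ l2minus Γ :=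
  Submodule.topologicalClosure_minimal _ (spanCycle_le_l2minus Γ hlf) (l2minus_isClosed Γ)

lemma S_le_Corth :
    (Submodule.span ℝ (Set.range (graphStar Γ))).topologicalClosure ≤
      ((Submodule.span ℝ (cycleSet Γ)).topologicalClosure)ᗮ := by
  rw [orthogonal_topClosure]
  refine Submodule.topologicalClosure_minimal _ ?_ (Submodule.isClosed_orthogonal _)
  rw [Submodule.span_le]
  rintro _ ⟨v, rfl⟩
  rw [SetLike.mem_coe, Submodule.mem_orthogonal]
  intro u hu
  induction hu using Submodule.span_induction with
  | mem c hc => rw [real_inner_comm]; exact inner_graphStar_cycle Γ hlf v hc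
  | zero => simp
  | add x y _ _ hx hy => rw [inner_add_left, hx, hy]; simp
  | smul c x _ hx => rw [inner_smul_left, hx]; simp

lemma S_le_T :
    (Submodule.span ℝ (Set.range (graphStar Γ))).topologicalClosure ≤
      ((Submodule.span ℝ (cycleSet Γ)).topologicalClosure)ᗮ ⊓ l2minus Γ :=
  le_inf (S_le_Corth Γ hlf) (S_le_l2minus Γ hlf)

lemma T_le_l2minus :
    ((Submodule.span ℝ (cycleSet Γ)).topologicalClosure)ᗮ ⊓ l2minus Γ ≤ l2minus Γ :=
  inf_le_right

lemma subspace_iff :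
    ((Submodule.span ℝ (cycleSet Γ)).topologicalClosure)ᗮ ⊓ l2minus Γ =
      (Submodule.span ℝ (Set.range (graphStar Γ))).topologicalClosure ↔
    ((Submodule.span ℝ (Set.range (graphStar Γ))) ⊔
        (Submodule.span ℝ (cycleSet Γ))).topologicalClosure = l2minus Γ := by
  constructor
  · intro h
    refine le_antisymm (Submodule.topologicalClosure_minimal _
      (sup_le (spanStar_le_l2minus Γ hlf) (spanCycle_le_l2minus Γ hlf)) (l2minus_isClosed Γ)) ?_
    intro x hx
    have hCc : IsClosed ((Submodule.span ℝ (cycleSet Γ)).topologicalClosure :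
        Set (lp (fun _ : Γ.Dart => ℝ) 2)) := Submodule.isClosed_topologicalClosure _
    set y := projCLM _ hCc x with hy
    have hyC : y ∈ (Submodule.span ℝ (cycleSet Γ)).topologicalClosure := projCLM_mem _ hCc x
    have hzT : x - y ∈ ((Submodule.span ℝ (cycleSet Γ)).topologicalClosure)ᗮ ⊓ l2minus Γ :=
      ⟨sub_projCLM_mem_orthogonal _ hCc x, Submodule.sub_mem _ hx (C_le_l2minus Γ hlf hyC)⟩
    rw [h] at hzT
    have h1 : (Submodule.span ℝ (cycleSet Γ)).topologicalClosure ≤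
        ((Submodule.span ℝ (Set.range (graphStar Γ))) ⊔
          (Submodule.span ℝ (cycleSet Γ))).topologicalClosure :=
      Submodule.topologicalClosure_mono le_sup_right
    have h2 : (Submodule.span ℝ (Set.range (graphStar Γ))).topologicalClosure ≤
        ((Submodule.span ℝ (Set.range (graphStar Γ))) ⊔
          (Submodule.span ℝ (cycleSet Γ))).topologicalClosure :=
      Submodule.topologicalClosure_mono le_sup_left
    have hx' : x = y + (x - y) := by abel
    rw [hx']
    exact Submodule.add_mem _ (h1 hyC) (h2 hzT)
  · intro h
    refine le_antisymm ?_ (S_le_T Γ hlf)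
    rintro x ⟨hx1, hx2⟩
    have hSc : IsClosed ((Submodule.span ℝ (Set.range (graphStar Γ))).topologicalClosure :
        Set (lp (fun _ : Γ.Dart => ℝ) 2)) := Submodule.isClosed_topologicalClosure _
    have hpx : projCLM _ hSc x ∈ (Submodule.span ℝ (Set.range (graphStar Γ))).topologicalClosure :=
      projCLM_mem _ hSc x
    have hw1 : x - projCLM _ hSc x ∈ (Submodule.span ℝ (Set.range (graphStar Γ)))ᗮ := by
      rw [← orthogonal_topClosure]
      exact sub_projCLM_mem_orthogonal _ hSc x
    have hw2 : x - projCLM _ hSc x ∈ (Submodule.span ℝ (cycleSet Γ))ᗮ := by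
      rw [← orthogonal_topClosure]
      exact Submodule.sub_mem _ hx1 (S_le_Corth Γ hlf hpx)
    have hwM : x - projCLM _ hSc x ∈ l2minus Γ :=
      Submodule.sub_mem _ hx2 (S_le_l2minus Γ hlf hpx)
    have hwO : x - projCLM _ hSc x ∈ (l2minus Γ)ᗮ := by
      rw [← h, orthogonal_topClosure, ← Submodule.inf_orthogonal]
      exact ⟨hw1, hw2⟩
    have : x - projCLM _ hSc x = 0 := by
      have := (Submodule.inf_orthogonal_eq_bot (l2minus Γ)).le ⟨hwM, hwO⟩
      simpa using this
    have hx' : x = projCLM _ hSc x := by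
      rw [sub_eq_zero] at this; exact this
    rw [hx']
    exact hpx

end subspaces


section key
variable (Γ : SimpleGraph V) (hlf : ∀ v : V, (Γ.neighborSet v).Finite)
include hlf

lemma T_eq_S_of_inner
    (hS : IsClosed ((Submodule.span ℝ (Set.range (graphStar Γ))).topologicalClosure :
      Set (lp (fun _ : Γ.Dart => ℝ) 2)))
    (hT : IsClosed ((((Submodule.span ℝ (cycleSet Γ)).topologicalClosure)ᗮ ⊓ l2minus Γ :
      Submodule ℝ (lp (fun _ : Γ.Dart => ℝ) 2)) : Set (lp (fun _ : Γ.Dart => ℝ) 2)))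
    (h : ∀ d : Γ.Dart,
      ⟪projCLM _ hS (chi Γ d), chi Γ d⟫_ℝ = ⟪projCLM _ hT (chi Γ d), chi Γ d⟫_ℝ) :
    ((Submodule.span ℝ (cycleSet Γ)).topologicalClosure)ᗮ ⊓ l2minus Γ =
      (Submodule.span ℝ (Set.range (graphStar Γ))).topologicalClosure := by
  set S := (Submodule.span ℝ (Set.range (graphStar Γ))).topologicalClosure with hSdef
  set T := ((Submodule.span ℝ (cycleSet Γ)).topologicalClosure)ᗮ ⊓ l2minus Γ with hTdef
  have hST : S ≤ T := S_le_T Γ hlf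
  -- Step 1: the projections agree on each chi
  have step1 : ∀ d : Γ.Dart, projCLM T hT (chi Γ d) = projCLM S hS (chi Γ d) := by
    intro d
    set χ := chi Γ d with hχ
    set u := projCLM T hT χ - projCLM S hS χ with hu
    have a1 : χ - projCLM S hS χ ∈ Sᗮ := sub_projCLM_mem_orthogonal S hS χ
    have a2 : χ - projCLM T hT χ ∈ Tᗮ := sub_projCLM_mem_orthogonal T hT χ
    have a2' : χ - projCLM T hT χ ∈ Sᗮ := Submodule.orthogonal_le hST a2
    have hu_s : u ∈ Sᗮ := by
      have h3 := Submodule.sub_mem _ a1 a2'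
      have : (χ - projCLM S hS χ) - (χ - projCLM T hT χ) = u := by rw [hu]; abel
      rwa [this] at h3
    have hu_T : u ∈ T := Submodule.sub_mem _ (projCLM_mem T hT χ) (hST (projCLM_mem S hS χ))
    have h0 : ⟪u, χ⟫_ℝ = 0 := by
      rw [hu, inner_sub_left, ← h d]
      ring
    have hups : ⟪u, projCLM S hS χ⟫_ℝ = 0 :=
      (Submodule.mem_orthogonal' _ _).1 hu_s _ (projCLM_mem S hS χ)
    have huct : ⟪u, χ - projCLM T hT χ⟫_ℝ = 0 :=
      (Submodule.mem_orthogonal _ _).1 a2 u hu_T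
    have huu : ⟪u, u⟫_ℝ = 0 := by
      have expand : ⟪u, u⟫_ℝ = ⟪u, χ⟫_ℝ - ⟪u, χ - projCLM T hT χ⟫_ℝ - ⟪u, projCLM S hS χ⟫_ℝ := by
        rw [hu]
        simp only [inner_sub_right]
        ring
      rw [expand, h0, hups, huct]
      ring
    have : u = 0 := inner_self_eq_zero.mp huu
    have := sub_eq_zero.mp this
    exact this
  -- Step 2
  refine le_antisymm ?_ hST
  intro x hx
  have hpx : projCLM S hS x ∈ S := projCLM_mem S hS x
  have hwS : x - projCLM S hS x ∈ Sᗮ := sub_projCLM_mem_orthogonal S hS x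
  have hwT : x - projCLM S hS x ∈ T := Submodule.sub_mem _ hx (hST hpx)
  have hwM : x - projCLM S hS x ∈ l2minus Γ := hwT.2
  have hzero : ∀ d : Γ.Dart, (x - projCLM S hS x : lp (fun _ : Γ.Dart => ℝ) 2) d = 0 := by
    intro d
    set w := x - projCLM S hS x with hwdef
    have h1 : ⟪w, chi Γ d⟫_ℝ = w d - w d.symm := inner_chi_right Γ w d
    have h2 : w d.symm = - w d := (mem_l2minus_iff Γ w).1 hwM d
    have h3 : ⟪w, chi Γ d⟫_ℝ = 0 := by
      have hsplit : ⟪w, chi Γ d⟫_ℝ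
          = ⟪w, projCLM T hT (chi Γ d)⟫_ℝ + ⟪w, chi Γ d - projCLM T hT (chi Γ d)⟫_ℝ := by
        rw [← inner_add_right]
        congr 1
        abel
      have hb : ⟪w, chi Γ d - projCLM T hT (chi Γ d)⟫_ℝ = 0 :=
        (Submodule.mem_orthogonal _ _).1 (sub_projCLM_mem_orthogonal T hT (chi Γ d)) w hwT
      have ha : ⟪w, projCLM T hT (chi Γ d)⟫_ℝ = 0 := by
        rw [step1 d]
        exact (Submodule.mem_orthogonal' _ _).1 hwS _ (projCLM_mem S hS (chi Γ d))
      rw [hsplit, ha, hb]; ring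
    rw [h3] at h1
    rw [h2] at h1
    linarith
  have hw0 : x - projCLM S hS x = 0 := by
    apply lp.ext
    funext d
    simpa using hzero d
  rw [show x = projCLM S hS x from (sub_eq_zero.mp hw0)]
  exact hpx

end key


section measure
variable (Γ : SimpleGraph V)

lemma exists_dart (s : Sym2 V) (hs : s ∈ Γ.edgeSet) : ∃ d : Γ.Dart, d.edge = s := by
  induction s using Sym2.ind with
  | _ a b => exact ⟨⟨(a, b), hs⟩, rfl⟩

lemma measure_eq_of_cylinders (μ ν : ProbabilityMeasure (Γ.edgeSet → Bool))
    (h : ∀ B : Finset Γ.Dart, (∀ d ∈ B, d.symm ∉ B) →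
      μ.toMeasure {z : Γ.edgeSet → Bool | ∀ d ∈ B, z ⟨d.edge, d.edge_mem⟩ = true}
        = ν.toMeasure {z : Γ.edgeSet → Bool | ∀ d ∈ B, z ⟨d.edge, d.edge_mem⟩ = true}) :
    μ = ν := by
  classical
  set α := Γ.edgeSet → Bool
  set C : Set (Set α) :=
    {s | ∃ E : Finset Γ.edgeSet, s = {z : α | ∀ e ∈ E, z e = true}} with hCdef
  have hpi : IsPiSystem C := by
    rintro s ⟨E₁, rfl⟩ t ⟨E₂, rfl⟩ -
    refine ⟨E₁ ∪ E₂, ?_⟩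
    ext z
    simp only [Set.mem_inter_iff, Set.mem_setOf_eq, Finset.mem_union]
    constructor
    · rintro ⟨h1, h2⟩ e he
      rcases he with he | he
      · exact h1 e he
      · exact h2 e he
    · intro hz
      exact ⟨fun e he => hz e (Or.inl he), fun e he => hz e (Or.inr he)⟩
  have hmeas : ∀ e : Γ.edgeSet, @Measurable α Bool (.generateFrom C) _ (fun z => z e) := by
    intro e
    refine @measurable_to_countable' Bool α _ _ (MeasurableSpace.generateFrom C) _ fun b => ?_
    have htrue : MeasurableSet[MeasurableSpace.generateFrom C]
        ((fun z : α => z e) ⁻¹' {true}) := by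
      apply MeasurableSpace.measurableSet_generateFrom
      refine ⟨{e}, ?_⟩
      ext z
      simp
    cases b
    · have : ((fun z : α => z e) ⁻¹' {false}) = ((fun z : α => z e) ⁻¹' {true})ᶜ := by
        ext z
        simp
      rw [this]
      exact htrue.compl
    · exact htrue
  have hgen : (inferInstance : MeasurableSpace α) = MeasurableSpace.generateFrom C := by
    refine le_antisymm ?_ (MeasurableSpace.generateFrom_le ?_)
    · exact iSup_le fun e => (hmeas e).comap_le
    · rintro s ⟨E, rfl⟩
      have : {z : α | ∀ e ∈ E, z e = true}
          = ⋂ e ∈ (E : Set Γ.edgeSet), (fun z : α => z e) ⁻¹' {true} := by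
        ext z
        simp
      rw [this]
      exact MeasurableSet.biInter E.countable_toSet
        fun e _ => (measurable_pi_apply e) (measurableSet_singleton _)
  have key : ∀ s ∈ C, μ.toMeasure s = ν.toMeasure s := by
    rintro s ⟨E, rfl⟩
    have φspec : ∀ e : Γ.edgeSet, ((exists_dart Γ e.1 e.2).choose).edge = (e : Sym2 V) :=
      fun e => (exists_dart Γ e.1 e.2).choose_spec
    set φ : Γ.edgeSet → Γ.Dart := fun e => (exists_dart Γ e.1 e.2).choose with hφdef
    set B : Finset Γ.Dart := E.image φ with hB
    have hsym : ∀ d ∈ B, d.symm ∉ B := by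
      intro d hd hds
      rw [hB, Finset.mem_image] at hd hds
      obtain ⟨e₁, -, rfl⟩ := hd
      obtain ⟨e₂, -, h2⟩ := hds
      have : (φ e₁).symm.edge = (φ e₂).edge := by rw [h2]
      rw [SimpleGraph.Dart.edge_symm, φspec, φspec] at this
      have he : e₁ = e₂ := Subtype.ext this
      rw [← he] at h2
      exact SimpleGraph.Dart.symm_ne (φ e₁) h2.symm
    have hset : {z : α | ∀ d ∈ B, z ⟨d.edge, d.edge_mem⟩ = true}
        = {z : α | ∀ e ∈ E, z e = true} := by
      ext z
      simp only [Set.mem_setOf_eq, hB, Finset.mem_image]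
      constructor
      · intro hz e he
        have := hz (φ e) ⟨e, he, rfl⟩
        have hee : (⟨(φ e).edge, (φ e).edge_mem⟩ : Γ.edgeSet) = e := Subtype.ext (φspec e)
        rwa [hee] at this
      · rintro hz d ⟨e, he, rfl⟩
        have hee : (⟨(φ e).edge, (φ e).edge_mem⟩ : Γ.edgeSet) = e := Subtype.ext (φspec e)
        rw [hee]
        exact hz e he
    rw [← hset]
    exact h B hsym
  apply MeasureTheory.ProbabilityMeasure.toMeasure_injective
  exact MeasureTheory.ext_of_generate_finite C hgen hpi key (by simp)

end measure


/-- For a connected locally finite countable graph, the wired spanning forest measure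
`WSF = P^★` and the free spanning forest measure `FSF = P^{◇ᗮ}` (both characterized by their
determinantal cylinder probabilities) coincide iff `∇HD = 0`, i.e. `ℓ²₋(Γ) = ★ ⊕ ◇`. -/
theorem wsf_eq_fsf_iff_no_harmonic_dirichlet [Countable V] [DecidableEq V]
    (Γ : SimpleGraph V) (hconn : Γ.Connected) (hlf : ∀ v : V, (Γ.neighborSet v).Finite)
    (μW μF : ProbabilityMeasure (Γ.edgeSet → Bool))
    (hW : ∀ B : Finset Γ.Dart, (∀ d ∈ B, d.symm ∉ B) →
      (μW {z : Γ.edgeSet → Bool | ∀ d ∈ B, z ⟨d.edge, d.edge_mem⟩ = true} : ℝ) =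
      (Matrix.of fun d d' : B =>
        ⟪projCLM ((Submodule.span ℝ (Set.range (graphStar Γ))).topologicalClosure)
            (Submodule.isClosed_topologicalClosure _) (chi Γ d), chi Γ d'⟫_ℝ / 2).det)
    (hF : ∀ B : Finset Γ.Dart, (∀ d ∈ B, d.symm ∉ B) →
      (μF {z : Γ.edgeSet → Bool | ∀ d ∈ B, z ⟨d.edge, d.edge_mem⟩ = true} : ℝ) =
      (Matrix.of fun d d' : B =>
        ⟪projCLM (((Submodule.span ℝ (cycleSet Γ)).topologicalClosure)ᗮ ⊓ l2minus Γ)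
            (isClosed_inf (Submodule.isClosed_orthogonal _) (Submodule.isClosed_orthogonal _))
            (chi Γ d), chi Γ d'⟫_ℝ / 2).det) :
    μW = μF ↔
      ((Submodule.span ℝ (Set.range (graphStar Γ))) ⊔
        (Submodule.span ℝ (cycleSet Γ))).topologicalClosure = l2minus Γ := by
  constructor
  · intro hμ
    rw [← subspace_iff Γ hlf]
    refine T_eq_S_of_inner Γ hlf (Submodule.isClosed_topologicalClosure _)
      (isClosed_inf (Submodule.isClosed_orthogonal _) (Submodule.isClosed_orthogonal _))
      fun d => ?_
    have hd : ∀ e ∈ ({d} : Finset Γ.Dart), e.symm ∉ ({d} : Finset Γ.Dart) := by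
      intro e he hs
      rw [Finset.mem_singleton] at he hs
      subst he
      exact SimpleGraph.Dart.symm_ne e hs
    have h1 := hW {d} hd
    have h2 := hF {d} hd
    rw [hμ] at h1
    have h3 := h1.symm.trans h2
    haveI : Unique (({d} : Finset Γ.Dart) : Type _) :=
      ⟨⟨⟨d, Finset.mem_singleton_self d⟩⟩, fun x => Subtype.ext (Finset.mem_singleton.mp x.2)⟩
    rw [Matrix.det_unique, Matrix.det_unique] at h3
    have hdef : ((default : (({d} : Finset Γ.Dart) : Type _)) : Γ.Dart) = d :=
      Finset.mem_singleton.mp (default : (({d} : Finset Γ.Dart) : Type _)).2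
    simp only [Matrix.of_apply, hdef] at h3
    have h4 : ⟪projCLM ((Submodule.span ℝ (Set.range (graphStar Γ))).topologicalClosure)
            (Submodule.isClosed_topologicalClosure _) (chi Γ d), chi Γ d⟫_ℝ / 2 =
        ⟪projCLM (((Submodule.span ℝ (cycleSet Γ)).topologicalClosure)ᗮ ⊓ l2minus Γ)
            (isClosed_inf (Submodule.isClosed_orthogonal _) (Submodule.isClosed_orthogonal _))
            (chi Γ d), chi Γ d⟫_ℝ / 2 := h3
    linarith
  · intro h
    have hTS := (subspace_iff Γ hlf).mpr h
    apply measure_eq_of_cylinders Γ μW μF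
    intro B hB
    have e1 := hW B hB
    have e2 := hF B hB
    have hproj : projCLM (((Submodule.span ℝ (cycleSet Γ)).topologicalClosure)ᗮ ⊓ l2minus Γ)
          (isClosed_inf (Submodule.isClosed_orthogonal _) (Submodule.isClosed_orthogonal _)) =
        projCLM ((Submodule.span ℝ (Set.range (graphStar Γ))).topologicalClosure)
          (Submodule.isClosed_topologicalClosure _) :=
      projCLM_congr hTS _ _
    rw [hproj] at e2
    have e3 : (μW {z : Γ.edgeSet → Bool | ∀ d ∈ B, z ⟨d.edge, d.edge_mem⟩ = true} : ℝ)
        = (μF {z : Γ.edgeSet → Bool | ∀ d ∈ B, z ⟨d.edge, d.edge_mem⟩ = true} : ℝ) :=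
      e1.trans e2.symm
    rw [← MeasureTheory.ProbabilityMeasure.ennreal_coeFn_eq_coeFn_toMeasure,
      ← MeasureTheory.ProbabilityMeasure.ennreal_coeFn_eq_coeFn_toMeasure]
    exact_mod_cast e3
end
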